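/- Siebeck's theorem, degree 3 case (Marden's theorem ingredient): Let z_1, z_2, z_3 be distinct complex numbers and m_1, m_2, m_3 > 0 with m_1 + m_2 + m_3 = 1. Let z_1', z_2' be the zeros of F(z) = m_1/(z - z_1) + m_2/(z - z_2) + m_3/(z - z_3). Then the point ζ_3 = (m_1 z_2 + m_2 z_1)/(m_1 + m_2) satisfies |ζ_3 - z_1'| + |ζ_3 - z_2'| = |ζ_1 - z_1'| + |ζ_1 - z_2'| = |ζ_2 - z_1'| + |ζ_2 - z_2'|, where ζ_1 = (m_2 z_3 + m_3 z_2)/(m_2 + m_3) and ζ_2 = (m_3 z_1 + m_1 z_3)/(m_3 + m_1); i.e., the three division points lie on a common ellipse with foci z_1' and z_2'. -/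

import Mathlib

open Complex

private lemma para (a b : ℂ) :
    Complex.normSq a + Complex.normSq b =
      (Complex.normSq (a + b) + Complex.normSq (a - b)) / 2 := by
  simp [Complex.normSq_apply]; ring

private lemma sq_expand (ζ f₁ f₂ : ℂ) :
    (‖ζ - f₁‖ + ‖ζ - f₂‖) ^ 2 =
      (Complex.normSq ((ζ - f₁) + (ζ - f₂)) + Complex.normSq (f₁ - f₂)) / 2 +
        2 * ‖(ζ - f₁) * (ζ - f₂)‖ := by
  rw [add_sq, Complex.sq_norm, Complex.sq_norm, norm_mul]
  have h := para (ζ - f₁) (ζ - f₂)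
  rw [show (ζ - f₁) - (ζ - f₂) = -(f₁ - f₂) by ring, Complex.normSq_neg] at h
  linear_combination h

set_option maxHeartbeats 2000000 in
theorem siebeck_deg3 (z₁ z₂ z₃ : ℂ)
    (hdist : z₁ ≠ z₂ ∧ z₂ ≠ z₃ ∧ z₁ ≠ z₃)
    (hcol : ¬ Collinear ℝ ({z₁, z₂, z₃} : Set ℂ))
    (m₁ m₂ m₃ : ℝ) (hm₁ : 0 < m₁) (hm₂ : 0 < m₂) (hm₃ : 0 < m₃)
    (hsum : m₁ + m₂ + m₃ = 1)
    (z₁' z₂' : ℂ)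
    (hF : ∀ z : ℂ, z ≠ z₁ → z ≠ z₂ → z ≠ z₃ →
      (m₁ : ℂ) / (z - z₁) + (m₂ : ℂ) / (z - z₂) + (m₃ : ℂ) / (z - z₃) =
        (z - z₁') * (z - z₂') / ((z - z₁) * (z - z₂) * (z - z₃)))
    (ζ₁ ζ₂ ζ₃ : ℂ)
    (hζ₁ : ζ₁ = ((m₂ : ℂ) * z₃ + (m₃ : ℂ) * z₂) / ((m₂ : ℂ) + (m₃ : ℂ)))
    (hζ₂ : ζ₂ = ((m₃ : ℂ) * z₁ + (m₁ : ℂ) * z₃) / ((m₃ : ℂ) + (m₁ : ℂ)))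
    (hζ₃ : ζ₃ = ((m₁ : ℂ) * z₂ + (m₂ : ℂ) * z₁) / ((m₁ : ℂ) + (m₂ : ℂ))) :
    ‖ζ₃ - z₁'‖ + ‖ζ₃ - z₂'‖ =
      ‖ζ₁ - z₁'‖ + ‖ζ₁ - z₂'‖ ∧
    ‖ζ₁ - z₁'‖ + ‖ζ₁ - z₂'‖ =
      ‖ζ₂ - z₁'‖ + ‖ζ₂ - z₂'‖ := by
  have hsumC : (m₁:ℂ) + m₂ + m₃ = 1 := by exact_mod_cast congrArg (Complex.ofReal) hsum
  have hm₃C : (m₃:ℂ) = 1 - m₁ - m₂ := by linear_combination hsumC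
  have h12 : ((m₁:ℂ) + m₂) ≠ 0 := by
    rw [← Complex.ofReal_add]; exact Complex.ofReal_ne_zero.mpr (by positivity)
  have h23 : ((m₂:ℂ) + m₃) ≠ 0 := by
    rw [← Complex.ofReal_add]; exact Complex.ofReal_ne_zero.mpr (by positivity)
  have e23 : ((m₂:ℂ) + m₃) = 1 - m₁ := by linear_combination hsumC
  have e31 : ((m₃:ℂ) + m₁) = 1 - m₂ := by linear_combination hsumC
  have h23' : ((1:ℂ) - m₁) ≠ 0 := e23 ▸ h23
  have h31 : ((m₃:ℂ) + m₁) ≠ 0 := by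
    rw [← Complex.ofReal_add]; exact Complex.ofReal_ne_zero.mpr (by positivity)
  have h31' : ((1:ℂ) - m₂) ≠ 0 := e31 ▸ h31
  -- step 1: polynomial identity away from the poles
  have keyA : ∀ z : ℂ, z ≠ z₁ → z ≠ z₂ → z ≠ z₃ →
      (m₁:ℂ)*(z-z₂)*(z-z₃) + (m₂:ℂ)*(z-z₁)*(z-z₃) + (m₃:ℂ)*(z-z₁)*(z-z₂)
        = (z - z₁') * (z - z₂') := by
    intro z h1 h2 h3
    have d1 : z - z₁ ≠ 0 := sub_ne_zero.mpr h1
    have d2 : z - z₂ ≠ 0 := sub_ne_zero.mpr h2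
    have d3 : z - z₃ ≠ 0 := sub_ne_zero.mpr h3
    have h := hF z h1 h2 h3
    field_simp at h
    linear_combination h
  -- step 2: symmetric functions of the critical points
  have hfin : ({z₁, z₂, z₃} : Set ℂ).Finite := by simp
  obtain ⟨w₁, hw₁, w₂, hw₂, hne⟩ := hfin.infinite_compl.nontrivial
  simp only [Set.mem_compl_iff, Set.mem_insert_iff, Set.mem_singleton_iff, not_or] at hw₁ hw₂
  have h1 := keyA w₁ hw₁.1 hw₁.2.1 hw₁.2.2
  have h2 := keyA w₂ hw₂.1 hw₂.2.1 hw₂.2.2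
  have hd : w₁ - w₂ ≠ 0 := sub_ne_zero.mpr hne
  have h0 : (z₁' + z₂' - ((m₁:ℂ)*(z₂+z₃) + (m₂:ℂ)*(z₁+z₃) + (m₃:ℂ)*(z₁+z₂))) * (w₁ - w₂) = 0 := by
    linear_combination h1 - h2 - (w₁^2 - w₂^2) * hsumC
  have hs : z₁' + z₂' = (m₁:ℂ)*(z₂+z₃) + (m₂:ℂ)*(z₁+z₃) + (m₃:ℂ)*(z₁+z₂) := by
    rcases mul_eq_zero.mp h0 with h | h
    · linear_combination h
    · exact absurd h hd
  have hp : z₁' * z₂' = (m₁:ℂ)*z₂*z₃ + (m₂:ℂ)*z₁*z₃ + (m₃:ℂ)*z₁*z₂ := by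
    linear_combination -h1 + w₁^2 * hsumC + w₁ * hs
  -- step 3: values of the quadratic at the three division points
  have hquad : ∀ ζ : ℂ, (ζ - z₁') * (ζ - z₂')
      = ζ^2 - ((m₁:ℂ)*(z₂+z₃) + (m₂:ℂ)*(z₁+z₃) + (m₃:ℂ)*(z₁+z₂))*ζ
        + ((m₁:ℂ)*z₂*z₃ + (m₂:ℂ)*z₁*z₃ + (m₃:ℂ)*z₁*z₂) := by
    intro ζ; linear_combination (-ζ) * hs + hp
  have hN₃ : (ζ₃ - z₁') * (ζ₃ - z₂')
      = -(((m₁*m₂*m₃ : ℝ)):ℂ) * (z₁ - z₂)^2 / (((m₁:ℂ) + m₂))^2 := by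
    rw [hquad, hζ₃]
    push_cast
    rw [hm₃C]
    field_simp
    ring
  have hN₁ : (ζ₁ - z₁') * (ζ₁ - z₂')
      = -(((m₁*m₂*m₃ : ℝ)):ℂ) * (z₂ - z₃)^2 / (((m₂:ℂ) + m₃))^2 := by
    rw [hquad, hζ₁, e23]
    push_cast
    rw [hm₃C]
    field_simp [h23']
    ring
  have hN₂ : (ζ₂ - z₁') * (ζ₂ - z₂')
      = -(((m₁*m₂*m₃ : ℝ)):ℂ) * (z₃ - z₁)^2 / (((m₃:ℂ) + m₁))^2 := by
    rw [hquad, hζ₂, e31]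
    push_cast
    rw [hm₃C]
    field_simp [h31']
    ring
  -- step 4: absolute values
  have habs3 : ‖(ζ₃ - z₁') * (ζ₃ - z₂')‖
      = m₁*m₂*m₃ / (m₁+m₂)^2 * Complex.normSq (z₁ - z₂) := by
    rw [hN₃, neg_mul, neg_div, ← Complex.ofReal_add, norm_neg, norm_div, norm_mul,
      norm_pow, norm_pow, Complex.norm_real, Real.norm_eq_abs, Complex.norm_real, Real.norm_eq_abs, Complex.sq_norm,
      abs_of_pos (by positivity : (0:ℝ) < m₁*m₂*m₃), abs_of_pos (by positivity : (0:ℝ) < m₁+m₂)]; ring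
  have habs1 : ‖(ζ₁ - z₁') * (ζ₁ - z₂')‖
      = m₁*m₂*m₃ / (m₂+m₃)^2 * Complex.normSq (z₂ - z₃) := by
    rw [hN₁, neg_mul, neg_div, ← Complex.ofReal_add, norm_neg, norm_div, norm_mul,
      norm_pow, norm_pow, Complex.norm_real, Real.norm_eq_abs, Complex.norm_real, Real.norm_eq_abs, Complex.sq_norm,
      abs_of_pos (by positivity : (0:ℝ) < m₁*m₂*m₃), abs_of_pos (by positivity : (0:ℝ) < m₂+m₃)]; ring
  have habs2 : ‖(ζ₂ - z₁') * (ζ₂ - z₂')‖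
      = m₁*m₂*m₃ / (m₃+m₁)^2 * Complex.normSq (z₃ - z₁) := by
    rw [hN₂, neg_mul, neg_div, ← Complex.ofReal_add, norm_neg, norm_div, norm_mul,
      norm_pow, norm_pow, Complex.norm_real, Real.norm_eq_abs, Complex.norm_real, Real.norm_eq_abs, Complex.sq_norm,
      abs_of_pos (by positivity : (0:ℝ) < m₁*m₂*m₃), abs_of_pos (by positivity : (0:ℝ) < m₃+m₁)]; ring
  -- squared sums of distances
  have key3 : (‖ζ₃ - z₁'‖ + ‖ζ₃ - z₂'‖)^2
      = (Complex.normSq (2*ζ₃ - ((m₁:ℂ)*(z₂+z₃)+(m₂:ℂ)*(z₁+z₃)+(m₃:ℂ)*(z₁+z₂)))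
          + Complex.normSq (z₁'-z₂'))/2
        + 2*(m₁*m₂*m₃/(m₁+m₂)^2 * Complex.normSq (z₁-z₂)) := by
    rw [sq_expand, habs3,
      show (ζ₃ - z₁') + (ζ₃ - z₂') = 2*ζ₃ - ((m₁:ℂ)*(z₂+z₃)+(m₂:ℂ)*(z₁+z₃)+(m₃:ℂ)*(z₁+z₂))
        from by linear_combination -hs]
  have key1 : (‖ζ₁ - z₁'‖ + ‖ζ₁ - z₂'‖)^2
      = (Complex.normSq (2*ζ₁ - ((m₁:ℂ)*(z₂+z₃)+(m₂:ℂ)*(z₁+z₃)+(m₃:ℂ)*(z₁+z₂)))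
          + Complex.normSq (z₁'-z₂'))/2
        + 2*(m₁*m₂*m₃/(m₂+m₃)^2 * Complex.normSq (z₂-z₃)) := by
    rw [sq_expand, habs1,
      show (ζ₁ - z₁') + (ζ₁ - z₂') = 2*ζ₁ - ((m₁:ℂ)*(z₂+z₃)+(m₂:ℂ)*(z₁+z₃)+(m₃:ℂ)*(z₁+z₂))
        from by linear_combination -hs]
  have key2 : (‖ζ₂ - z₁'‖ + ‖ζ₂ - z₂'‖)^2
      = (Complex.normSq (2*ζ₂ - ((m₁:ℂ)*(z₂+z₃)+(m₂:ℂ)*(z₁+z₃)+(m₃:ℂ)*(z₁+z₂)))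
          + Complex.normSq (z₁'-z₂'))/2
        + 2*(m₁*m₂*m₃/(m₃+m₁)^2 * Complex.normSq (z₃-z₁)) := by
    rw [sq_expand, habs2,
      show (ζ₂ - z₁') + (ζ₂ - z₂') = 2*ζ₂ - ((m₁:ℂ)*(z₂+z₃)+(m₂:ℂ)*(z₁+z₃)+(m₃:ℂ)*(z₁+z₂))
        from by linear_combination -hs]
  -- the invariance identity
  have inv31 : Complex.normSq (2*ζ₃ - ((m₁:ℂ)*(z₂+z₃)+(m₂:ℂ)*(z₁+z₃)+(m₃:ℂ)*(z₁+z₂)))/2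
        + 2*(m₁*m₂*m₃/(m₁+m₂)^2 * Complex.normSq (z₁-z₂))
      = Complex.normSq (2*ζ₁ - ((m₁:ℂ)*(z₂+z₃)+(m₂:ℂ)*(z₁+z₃)+(m₃:ℂ)*(z₁+z₂)))/2
        + 2*(m₁*m₂*m₃/(m₂+m₃)^2 * Complex.normSq (z₂-z₃)) := by
    have h : ((Complex.normSq (2*ζ₃ - ((m₁:ℂ)*(z₂+z₃)+(m₂:ℂ)*(z₁+z₃)+(m₃:ℂ)*(z₁+z₂)))/2
        + 2*(m₁*m₂*m₃/(m₁+m₂)^2 * Complex.normSq (z₁-z₂)) : ℝ) : ℂ)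
      = ((Complex.normSq (2*ζ₁ - ((m₁:ℂ)*(z₂+z₃)+(m₂:ℂ)*(z₁+z₃)+(m₃:ℂ)*(z₁+z₂)))/2
        + 2*(m₁*m₂*m₃/(m₂+m₃)^2 * Complex.normSq (z₂-z₃)) : ℝ) : ℂ) := by
      push_cast
      rw [← Complex.mul_conj, ← Complex.mul_conj, ← Complex.mul_conj, ← Complex.mul_conj]
      rw [hζ₃, hζ₁, e23]
      simp only [map_sub, map_add, map_mul, map_div₀, Complex.conj_ofReal, map_ofNat, map_one]
      rw [hm₃C]
      field_simp [h23']
      ring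
    exact_mod_cast h
  have inv12 : Complex.normSq (2*ζ₁ - ((m₁:ℂ)*(z₂+z₃)+(m₂:ℂ)*(z₁+z₃)+(m₃:ℂ)*(z₁+z₂)))/2
        + 2*(m₁*m₂*m₃/(m₂+m₃)^2 * Complex.normSq (z₂-z₃))
      = Complex.normSq (2*ζ₂ - ((m₁:ℂ)*(z₂+z₃)+(m₂:ℂ)*(z₁+z₃)+(m₃:ℂ)*(z₁+z₂)))/2
        + 2*(m₁*m₂*m₃/(m₃+m₁)^2 * Complex.normSq (z₃-z₁)) := by
    have h : ((Complex.normSq (2*ζ₁ - ((m₁:ℂ)*(z₂+z₃)+(m₂:ℂ)*(z₁+z₃)+(m₃:ℂ)*(z₁+z₂)))/2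
        + 2*(m₁*m₂*m₃/(m₂+m₃)^2 * Complex.normSq (z₂-z₃)) : ℝ) : ℂ)
      = ((Complex.normSq (2*ζ₂ - ((m₁:ℂ)*(z₂+z₃)+(m₂:ℂ)*(z₁+z₃)+(m₃:ℂ)*(z₁+z₂)))/2
        + 2*(m₁*m₂*m₃/(m₃+m₁)^2 * Complex.normSq (z₃-z₁)) : ℝ) : ℂ) := by
      push_cast
      rw [← Complex.mul_conj, ← Complex.mul_conj, ← Complex.mul_conj, ← Complex.mul_conj]
      rw [hζ₁, hζ₂, e23, e31]
      simp only [map_sub, map_add, map_mul, map_div₀, Complex.conj_ofReal, map_ofNat, map_one]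
      rw [hm₃C]
      field_simp [h23', h31']
      ring
    exact_mod_cast h
  -- assemble
  have n3 : (0:ℝ) ≤ ‖ζ₃ - z₁'‖ + ‖ζ₃ - z₂'‖ :=
    add_nonneg (norm_nonneg _) (norm_nonneg _)
  have n1 : (0:ℝ) ≤ ‖ζ₁ - z₁'‖ + ‖ζ₁ - z₂'‖ :=
    add_nonneg (norm_nonneg _) (norm_nonneg _)
  have n2 : (0:ℝ) ≤ ‖ζ₂ - z₁'‖ + ‖ζ₂ - z₂'‖ :=
    add_nonneg (norm_nonneg _) (norm_nonneg _)
  have hsq31 : (‖ζ₃ - z₁'‖ + ‖ζ₃ - z₂'‖)^2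
      = (‖ζ₁ - z₁'‖ + ‖ζ₁ - z₂'‖)^2 := by
    rw [key3, key1]; linarith [inv31]
  have hsq12 : (‖ζ₁ - z₁'‖ + ‖ζ₁ - z₂'‖)^2
      = (‖ζ₂ - z₁'‖ + ‖ζ₂ - z₂'‖)^2 := by
    rw [key1, key2]; linarith [inv12]
  constructor
  · have h := congrArg Real.sqrt hsq31
    rwa [Real.sqrt_sq n3, Real.sqrt_sq n1] at h
  · have h := congrArg Real.sqrt hsq12
    rwa [Real.sqrt_sq n1, Real.sqrt_sq n2] at h
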